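/- Let W be a nonnegative P×P matrix. Then tr(exp(W)) ≥ P, with equality if and only if the directed graph of W (edge (i,j) iff W_{ij} > 0, including self-loops) is acyclic. -/

import Mathlib

open NormedSpace

attribute [local instance] Matrix.linftyOpNormedRing Matrix.linftyOpNormedAlgebra

section aux

variable {P : ℕ} (W : Matrix (Fin P) (Fin P) ℝ)

lemma pow_entry_nonneg (hnonneg : ∀ i j, 0 ≤ W i j) :
    ∀ (k : ℕ) (i j : Fin P), 0 ≤ (W ^ k) i j := by
  intro k
  induction k with
  | zero => intro i j; simp [Matrix.one_apply]; positivity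
  | succ n ih =>
      intro i j
      rw [pow_succ, Matrix.mul_apply]
      exact Finset.sum_nonneg fun c _ => mul_nonneg (ih i c) (hnonneg c j)

lemma pow_pos_transGen (hnonneg : ∀ i j, 0 ≤ W i j) :
    ∀ (k : ℕ) (i j : Fin P), 0 < (W ^ (k + 1)) i j →
      Relation.TransGen (fun a b => 0 < W a b) i j := by
  intro k
  induction k with
  | zero => intro i j h; rw [pow_one] at h; exact Relation.TransGen.single h
  | succ n ih =>
      intro i j h
      rw [pow_succ, Matrix.mul_apply] at h
      obtain ⟨c, _, hc⟩ : ∃ c ∈ Finset.univ, 0 < (W ^ (n + 1)) i c * W c j := by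
        by_contra hcon
        push_neg at hcon
        have : ∑ c, (W ^ (n + 1)) i c * W c j ≤ 0 :=
          Finset.sum_nonpos fun c hcmem => hcon c hcmem
        linarith
      have h1 : 0 < (W ^ (n + 1)) i c :=
        lt_of_le_of_ne (pow_entry_nonneg W hnonneg _ i c) fun he => by
          rw [← he] at hc; simp at hc
      have h2 : 0 < W c j :=
        lt_of_le_of_ne (hnonneg c j) fun he => by rw [← he] at hc; simp at hc
      exact (ih i c h1).tail h2

lemma transGen_pow_pos (hnonneg : ∀ i j, 0 ≤ W i j) (i j : Fin P)
    (h : Relation.TransGen (fun a b => 0 < W a b) i j) :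
    ∃ k, 0 < (W ^ (k + 1)) i j := by
  induction h with
  | single hb => exact ⟨0, by rwa [pow_one]⟩
  | @tail b c _ hbc ih =>
      obtain ⟨k, hk⟩ := ih
      refine ⟨k + 1, ?_⟩
      rw [pow_succ, Matrix.mul_apply]
      have : 0 < (W ^ (k + 1)) i b * W b c := mul_pos hk hbc
      refine Finset.sum_pos' (fun d _ => mul_nonneg (pow_entry_nonneg W hnonneg _ i d)
        (hnonneg d c)) ⟨b, Finset.mem_univ b, this⟩

end aux

set_option maxHeartbeats 1000000 in
theorem trace_exp_ge_and_eq_iff_acyclic (P : ℕ) (W : Matrix (Fin P) (Fin P) ℝ)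
    (hnonneg : ∀ i j, 0 ≤ W i j) :
    (P : ℝ) ≤ (NormedSpace.exp W).trace ∧
      ((NormedSpace.exp W).trace = (P : ℝ) ↔
        ∀ i : Fin P, ¬ Relation.TransGen (fun a b => 0 < W a b) i i) := by
  have hsum : Summable fun n : ℕ => ((n.factorial : ℝ)⁻¹) • W ^ n := expSeries_summable' W
  have htraceC : Continuous (Matrix.trace : Matrix (Fin P) (Fin P) ℝ → ℝ) :=
    LinearMap.continuous_of_finiteDimensional (Matrix.traceLinearMap (Fin P) ℝ ℝ)
  have key : (exp W).trace = ∑' n : ℕ, ((n.factorial : ℝ)⁻¹) * (W ^ n).trace := by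
    rw [exp_eq_tsum (𝕂 := ℝ)]
    have := ((Matrix.traceLinearMap (Fin P) ℝ ℝ).toContinuousLinearMap).map_tsum hsum
    simpa [Matrix.trace_smul, smul_eq_mul] using this
  set f : ℕ → ℝ := fun n => ((n.factorial : ℝ)⁻¹) * (W ^ n).trace with hf
  have hfsum : Summable f := by
    have := hsum.map (Matrix.traceLinearMap (Fin P) ℝ ℝ) htraceC
    simpa [hf, Function.comp_def, Matrix.trace_smul, smul_eq_mul] using this
  have hf0 : f 0 = (P : ℝ) := by simp [hf]
  have hfnonneg : ∀ n, 0 ≤ f n := fun n =>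
    mul_nonneg (by positivity)
      (Finset.sum_nonneg fun i _ => pow_entry_nonneg W hnonneg n i i)
  have hsplit : (exp W).trace = (P : ℝ) + ∑' n : ℕ, f (n + 1) := by
    rw [key, ← hf0, Summable.tsum_eq_zero_add hfsum]
  have htail_nonneg : 0 ≤ ∑' n : ℕ, f (n + 1) :=
    tsum_nonneg fun n => hfnonneg (n + 1)
  constructor
  · rw [hsplit]; linarith
  · rw [hsplit]
    constructor
    · intro heq i hTG
      have htail0 : ∑' n : ℕ, f (n + 1) = 0 := by linarith
      have htailsum : Summable fun n : ℕ => f (n + 1) :=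
        hfsum.comp_injective (add_left_injective 1)
      have hall : ∀ n : ℕ, f (n + 1) = 0 := fun n =>
        le_antisymm (htail0 ▸ Summable.le_tsum htailsum n fun m _ => hfnonneg (m + 1))
          (hfnonneg (n + 1))
      obtain ⟨k, hk⟩ := transGen_pow_pos W hnonneg i i hTG
      have htrpos : 0 < (W ^ (k + 1)).trace :=
        Finset.sum_pos' (fun d _ => pow_entry_nonneg W hnonneg _ d d)
          ⟨i, Finset.mem_univ i, hk⟩
      have : 0 < f (k + 1) := mul_pos (by positivity) htrpos
      rw [hall k] at this
      exact lt_irrefl 0 this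
    · intro hacyc
      have hall : ∀ n : ℕ, f (n + 1) = 0 := by
        intro n
        have : (W ^ (n + 1)).trace = 0 := by
          refine Finset.sum_eq_zero fun i _ => ?_
          by_contra hne
          have hpos : 0 < (W ^ (n + 1)) i i :=
            lt_of_le_of_ne (pow_entry_nonneg W hnonneg _ i i) (Ne.symm hne)
          exact hacyc i (pow_pos_transGen W hnonneg n i i hpos)
        simp [hf, this]
      have : ∑' n : ℕ, f (n + 1) = 0 := by simp [hall]
      rw [this, add_zero]
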